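/- Let r ≥ 2 and k ≥ 1, and let X be the random variable giving the number of descents of a uniformly random permutation π ∈ S_{rk+1} whose inverse is a 2134⋯(r+1)-cluster. Then the expected value of X is (rk+1)/(r+1). -/

import Mathlib

open scoped Classical

noncomputable section

/-- One-line notation (0-based positions and values) of a permutation of `Fin n`. -/
def ofPerm {n : ℕ} (π : Equiv.Perm (Fin n)) : ℕ → ℕ :=
  fun i => if h : i < n then (π ⟨i, h⟩ : ℕ) else 0

/-- Number of descents of a word of length `n`. -/
def desNum (n : ℕ) (w : ℕ → ℕ) : ℕ :=
  ((Finset.range (n - 1)).filter (fun i => w (i + 1) < w i)).card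

/-- Number of peaks of a word of length `n`. -/
def pkNum (n : ℕ) (w : ℕ → ℕ) : ℕ :=
  ((Finset.Ico 1 (n - 1)).filter (fun i => w (i - 1) < w i ∧ w (i + 1) < w i)).card

/-- Number of left peaks of a word of length `n`. -/
def lpkNum (n : ℕ) (w : ℕ → ℕ) : ℕ :=
  ((Finset.range (n - 1)).filter
    (fun i => (1 ≤ i ∧ w (i - 1) < w i ∧ w (i + 1) < w i) ∨ (i = 0 ∧ w 1 < w 0))).card

/-- A word of length `r*k+1` is a `2134⋯(r+1)`-cluster: in each window of length `r+1`
starting at position `r*j` (`0 ≤ j ≤ k-1`), the second entry is smallest, the first entry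
is second smallest, and the remaining entries increase. -/
def IsCluster (r k : ℕ) (w : ℕ → ℕ) : Prop :=
  ∀ j < k, w (r * j + 1) < w (r * j) ∧ w (r * j) < w (r * j + 2) ∧
    ∀ l, 2 ≤ l → l < r → w (r * j + l) < w (r * j + l + 1)

/-- Permutations of `S_{rk+1}` whose inverse is a `2134⋯(r+1)`-cluster. -/
def clusterSet (r k : ℕ) : Finset (Equiv.Perm (Fin (r * k + 1))) :=
  Finset.univ.filter (fun π => IsCluster r k (ofPerm π⁻¹))

open Finset Equiv

section aux
variable {n : ℕ}

lemma ofPerm_apply (σ : Perm (Fin n)) {i : ℕ} (hi : i < n) :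
    ofPerm σ i = (σ ⟨i, hi⟩ : ℕ) := by simp [ofPerm, hi]

lemma ofPerm_lt (σ : Perm (Fin n)) {i : ℕ} (hi : i < n) : ofPerm σ i < n := by
  rw [ofPerm_apply σ hi]; exact (σ ⟨i, hi⟩).isLt

lemma ofPerm_inv_ofPerm (σ : Perm (Fin n)) {i : ℕ} (hi : i < n) :
    ofPerm σ⁻¹ (ofPerm σ i) = i := by
  rw [ofPerm_apply σ hi, ofPerm_apply _ (σ ⟨i, hi⟩).isLt]
  simp [Equiv.Perm.inv_def]

lemma ofPerm_ofPerm_inv (σ : Perm (Fin n)) {i : ℕ} (hi : i < n) :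
    ofPerm σ (ofPerm σ⁻¹ i) = i := by
  have := ofPerm_inv_ofPerm σ⁻¹ hi
  simpa using this

lemma ofPerm_inj (σ : Perm (Fin n)) {i j : ℕ} (hi : i < n) (hj : j < n)
    (h : ofPerm σ i = ofPerm σ j) : i = j := by
  have h2 := ofPerm_inv_ofPerm σ hi
  rw [h, ofPerm_inv_ofPerm σ hj] at h2
  omega

lemma ofPerm_exists (σ : Perm (Fin n)) {y : ℕ} (hy : y < n) :
    ∃ i, i < n ∧ ofPerm σ i = y :=
  ⟨ofPerm σ⁻¹ y, ofPerm_lt _ hy, ofPerm_ofPerm_inv σ hy⟩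

lemma perm_ext {σ τ : Perm (Fin n)} (h : ∀ i, i < n → ofPerm σ i = ofPerm τ i) : σ = τ := by
  apply Equiv.ext
  intro x
  have hx := h x.1 x.2
  rw [ofPerm_apply σ x.2, ofPerm_apply τ x.2] at hx
  exact Fin.ext (by simpa using hx)

lemma ofPerm_card_le (σ : Perm (Fin n)) {x : ℕ} (hx : x < n) (A : Finset ℕ)
    (hA : ∀ a ∈ A, a < n ∧ ofPerm σ a < ofPerm σ x) : A.card ≤ ofPerm σ x := by
  have h1 : A.image (ofPerm σ) ⊆ Finset.range (ofPerm σ x) := by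
    intro y hy
    simp only [Finset.mem_image] at hy
    obtain ⟨a, ha, rfl⟩ := hy
    exact Finset.mem_range.mpr (hA a ha).2
  have h2 : (A.image (ofPerm σ)).card = A.card :=
    Finset.card_image_of_injOn (fun a ha b hb hab => ofPerm_inj σ (hA a ha).1 (hA b hb).1 hab)
  calc A.card = (A.image (ofPerm σ)).card := h2.symm
    _ ≤ (Finset.range (ofPerm σ x)).card := Finset.card_le_card h1
    _ = ofPerm σ x := Finset.card_range _

end aux

def shiftN (v u : ℕ) : ℕ := if u < v then u else u + 1

lemma shiftN_lt_iff {v a b : ℕ} : shiftN v a < shiftN v b ↔ a < b := by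
  unfold shiftN; split_ifs <;> omega

lemma shiftN_ne {v u : ℕ} : shiftN v u ≠ v := by unfold shiftN; split_ifs <;> omega

lemma shiftN_le {v u : ℕ} : shiftN v u ≤ u + 1 := by unfold shiftN; split_ifs <;> omega

def insPerm {m N : ℕ} (h : m < N) (π' : Perm (Fin m)) (v : Fin m) : Perm (Fin N) :=
  Equiv.ofBijective (fun x =>
    if hx : (x : ℕ) < (v : ℕ) then ⟨(π' ⟨x, lt_trans hx v.isLt⟩ : ℕ), lt_trans (π' _).isLt h⟩
    else if hx2 : (x : ℕ) = (v : ℕ) then ⟨m, h⟩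
    else if hx3 : (x : ℕ) ≤ m then ⟨(π' ⟨(x : ℕ) - 1, by omega⟩ : ℕ), lt_trans (π' _).isLt h⟩
    else x) (by
    rw [← Finite.injective_iff_bijective]
    intro x y hxy
    dsimp only at hxy
    have hinj : ∀ (a b : Fin m) (ha : (a : ℕ) < m) (hb : (b : ℕ) < m),
        (π' a : ℕ) = (π' b : ℕ) → (a : ℕ) = (b : ℕ) := by
      intro a b _ _ hab
      exact congrArg Fin.val (π'.injective (Fin.ext hab))
    apply Fin.ext
    split_ifs at hxy with h1 h2 h3 h4 h5 h6 h7 h8 h9 h10 h11 h12 <;>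
      first
        | (have hval := congrArg Fin.val hxy
           simp only [Fin.val_mk] at hval
           first
             | (have := hinj _ _ (Fin.is_lt _) (Fin.is_lt _) hval
                simp only [Fin.val_mk] at this
                omega)
             | (have hb1 := (π' ⟨(x : ℕ), by omega⟩).isLt
                have hb2 := (π' ⟨(y : ℕ), by omega⟩).isLt
                have hb3 := v.isLt
                omega)
             | omega)
        | exact congrArg Fin.val hxy)

lemma ofPerm_insPerm {m N : ℕ} (h : m < N) (π' : Perm (Fin m)) (v : Fin m)
    {i : ℕ} (hi : i < N) :
    ofPerm (insPerm h π' v) i =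
      if i < (v : ℕ) then ofPerm π' i
      else if i = (v : ℕ) then m
      else if i ≤ m then ofPerm π' (i - 1)
      else i := by
  rw [ofPerm_apply _ hi]
  unfold insPerm
  rw [Equiv.ofBijective_apply]
  have hv := v.isLt
  dsimp only
  split_ifs with h1 h2 h3
  · rw [ofPerm_apply π' (by omega)]
  · rfl
  · rw [ofPerm_apply π' (by omega)]
  · rfl
lemma ofPerm_insPerm_symm {m N : ℕ} (h : m < N) (π' : Perm (Fin m)) (v : Fin m)
    {i : ℕ} (hi : i < N) :
    ofPerm (insPerm h π' v)⁻¹ i =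
      if i < m then shiftN (v : ℕ) (ofPerm π'⁻¹ i) else if i = m then (v : ℕ) else i := by
  have hv := v.isLt
  split_ifs with h1 h2
  · have hp : ofPerm π'⁻¹ i < m := ofPerm_lt _ h1
    by_cases hpv : ofPerm π'⁻¹ i < (v : ℕ)
    · have hu : shiftN (v : ℕ) (ofPerm π'⁻¹ i) = ofPerm π'⁻¹ i := if_pos hpv
      rw [hu]
      have key : ofPerm (insPerm h π' v) (ofPerm π'⁻¹ i) = i := by
        rw [ofPerm_insPerm h π' v (by omega), if_pos hpv, ofPerm_ofPerm_inv π' h1]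
      have h3 := ofPerm_inv_ofPerm (insPerm h π' v) (show ofPerm π'⁻¹ i < N by omega)
      rw [key] at h3; exact h3
    · have hu : shiftN (v : ℕ) (ofPerm π'⁻¹ i) = ofPerm π'⁻¹ i + 1 := if_neg hpv
      rw [hu]
      have key : ofPerm (insPerm h π' v) (ofPerm π'⁻¹ i + 1) = i := by
        rw [ofPerm_insPerm h π' v (by omega), if_neg (by omega), if_neg (by omega),
          if_pos (by omega)]
        simpa using ofPerm_ofPerm_inv π' h1
      have h3 := ofPerm_inv_ofPerm (insPerm h π' v) (show ofPerm π'⁻¹ i + 1 < N by omega)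
      rw [key] at h3; exact h3
  · have key : ofPerm (insPerm h π' v) (v : ℕ) = m := by
      rw [ofPerm_insPerm h π' v (by omega), if_neg (by omega), if_pos rfl]
    have h3 := ofPerm_inv_ofPerm (insPerm h π' v) (show (v : ℕ) < N by omega)
    rw [key] at h3; rw [h2]; exact h3
  · have key : ofPerm (insPerm h π' v) i = i := by
      rw [ofPerm_insPerm h π' v hi, if_neg (by omega), if_neg (by omega), if_neg (by omega)]
    have h3 := ofPerm_inv_ofPerm (insPerm h π' v) hi
    rw [key] at h3; exact h3

lemma cluster_chain {r k : ℕ} {w : ℕ → ℕ} (hw : IsCluster r k w) {j a b : ℕ}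
    (hj : j < k) (h2 : 2 ≤ a) (hab : a < b) (hbr : b ≤ r) :
    w (r * j + a) < w (r * j + b) := by
  induction b with
  | zero => omega
  | succ b ih =>
    rcases Nat.lt_or_ge a b with hab2 | hab2
    · exact lt_trans (ih hab2 (by omega)) ((hw j hj).2.2 b (by omega) (by omega))
    · have hab3 : a = b := by omega
      subst hab3
      exact (hw j hj).2.2 a h2 (by omega)

lemma cluster_lt_top {r k : ℕ} {w : ℕ → ℕ} (hr : 2 ≤ r) (hw : IsCluster r k w) :
    ∀ j, j ≤ k → ∀ p, p < r * j → w p < w (r * j) := by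
  intro j
  induction j with
  | zero => intro _ p hp; omega
  | succ j ih =>
    intro hj p hp
    have hjk : j < k := by omega
    have hrj : r * (j + 1) = r * j + r := by ring
    have hstep : w (r * j) < w (r * (j + 1)) := by
      rw [hrj]
      rcases Nat.eq_or_lt_of_le hr with h2 | h2
      · rw [show r * j + r = r * j + 2 by omega]; exact (hw j hjk).2.1
      · exact lt_trans (hw j hjk).2.1 (cluster_chain hw hjk (le_refl 2) h2 (le_refl r))
    rcases Nat.lt_or_ge p (r * j) with h1 | h1
    · exact lt_trans (ih (by omega) p h1) hstep
    · have hlr : p - r * j < r := by omega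
      by_cases hl0 : p = r * j
      · rw [hl0]; exact hstep
      by_cases hl1 : p = r * j + 1
      · rw [hl1]; exact lt_trans (hw j hjk).1 hstep
      · have hl2 : 2 ≤ p - r * j := by omega
        have hp2 : p = r * j + (p - r * j) := by omega
        rw [hp2, hrj]
        exact cluster_chain hw hjk hl2 (by omega) (le_refl r)

lemma cluster_word_top {r k : ℕ} (hr : 2 ≤ r) (σ : Perm (Fin (r * k + 1)))
    (hw : IsCluster r k (ofPerm σ⁻¹)) : ofPerm σ⁻¹ (r * k) = r * k := by
  obtain ⟨p, hp, hval⟩ := ofPerm_exists σ⁻¹ (show r * k < r * k + 1 by omega)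
  have htop : ofPerm σ⁻¹ (r * k) < r * k + 1 := ofPerm_lt _ (by omega)
  rcases Nat.lt_or_ge p (r * k) with h1 | h1
  · have := cluster_lt_top hr hw k (le_refl k) p h1
    omega
  · have hpk : p = r * k := by omega
    subst hpk; exact hval

section bigword

variable {r k : ℕ} (hr : 2 ≤ r) (σ : Perm (Fin (r * (k + 1) + 1)))
  (hw : IsCluster r (k + 1) (ofPerm σ⁻¹))

include hr hw

lemma big_rk_lt : ∀ l, 1 ≤ l → l ≤ r - 1 → ofPerm σ⁻¹ (r * k) < ofPerm σ⁻¹ (r * k + 1 + l) := by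
  intro l h1 h2
  have hwk := hw k (by omega)
  have e1 : r * k + 1 + l = r * k + (l + 1) := by omega
  rw [e1]
  by_cases hl1 : l = 1
  · rw [hl1]; exact hwk.2.1
  · exact lt_trans hwk.2.1 (cluster_chain hw (by omega) (le_refl 2) (by omega) (by omega))

lemma big_low : ∀ l, 1 ≤ l → l ≤ r - 1 →
    ∀ q, q < r * k + 1 + l → ofPerm σ⁻¹ q < ofPerm σ⁻¹ (r * k + 1 + l) := by
  intro l h1 h2 q hq
  have hwk := hw k (by omega)
  have hrkl := big_rk_lt hr σ hw l h1 h2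
  rcases Nat.lt_or_ge q (r * k) with h3 | h3
  · exact lt_trans (cluster_lt_top hr hw k (by omega) q h3) hrkl
  by_cases h4 : q = r * k
  · rw [h4]; exact hrkl
  by_cases h5 : q = r * k + 1
  · rw [h5]; exact lt_trans hwk.1 hrkl
  · -- q = r*k+1+l'' with 1 ≤ l'' < l
    have hl'' : 1 ≤ q - (r * k + 1) ∧ q - (r * k + 1) < l := by omega
    have e1 : q = r * k + (q - (r * k + 1) + 1) := by omega
    have e2 : r * k + 1 + l = r * k + (l + 1) := by omega
    rw [e1, e2]
    exact cluster_chain hw (by omega) (by omega) (by omega) (by omega)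

lemma big_F2 : ∀ l, 1 ≤ l → l ≤ r - 1 → ofPerm σ⁻¹ (r * k + 1 + l) = r * k + 1 + l := by
  have e : r * (k + 1) = r * k + r := by ring
  have hlb : ∀ l, 1 ≤ l → l ≤ r - 1 → r * k + 1 + l ≤ ofPerm σ⁻¹ (r * k + 1 + l) := by
    intro l h1 h2
    have := ofPerm_card_le σ⁻¹ (x := r * k + 1 + l) (by omega) (Finset.range (r * k + 1 + l))
      (by
        intro a ha
        rw [Finset.mem_range] at ha
        exact ⟨by omega, big_low hr σ hw l h1 h2 a ha⟩)
    simpa using this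
  have key : ∀ t l, 1 ≤ l → l + t = r - 1 → ofPerm σ⁻¹ (r * k + 1 + l) = r * k + 1 + l := by
    intro t
    induction t with
    | zero =>
      intro l h1 h2
      have hub : ofPerm σ⁻¹ (r * k + 1 + l) < r * (k + 1) + 1 := ofPerm_lt _ (by omega)
      have := hlb l h1 (by omega)
      omega
    | succ t ih =>
      intro l h1 h2
      have e1 : r * k + 1 + l = r * k + (l + 1) := by omega
      have e2 : r * k + 1 + (l + 1) = r * k + (l + 2) := by omega
      have hlt : ofPerm σ⁻¹ (r * k + 1 + l) < ofPerm σ⁻¹ (r * k + 1 + (l + 1)) := by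
        rw [e1, e2]
        exact cluster_chain hw (by omega) (by omega) (by omega) (by omega)
      rw [ih (l + 1) (by omega) (by omega)] at hlt
      have := hlb l h1 (by omega)
      omega
  intro l h1 h2
  exact key (r - 1 - l) l h1 (by omega)

lemma big_F1 : ofPerm σ⁻¹ (r * k) = r * k + 1 := by
  have e : r * (k + 1) = r * k + r := by ring
  have hwk := hw k (by omega)
  have hub : ofPerm σ⁻¹ (r * k) < ofPerm σ⁻¹ (r * k + 1 + 1) := big_rk_lt hr σ hw 1 le_rfl (by omega)
  rw [big_F2 hr σ hw 1 le_rfl (by omega)] at hub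
  have hlb := ofPerm_card_le σ⁻¹ (x := r * k) (by omega)
    (insert (r * k + 1) (Finset.range (r * k)))
    (by
      intro a ha
      rw [Finset.mem_insert, Finset.mem_range] at ha
      rcases ha with ha | ha
      · rw [ha]; exact ⟨by omega, hwk.1⟩
      · exact ⟨by omega, cluster_lt_top hr hw k (by omega) a ha⟩)
  rw [Finset.card_insert_of_notMem (by simp), Finset.card_range] at hlb
  omega

lemma big_F3 : ofPerm σ⁻¹ (r * k + 1) < r * k + 1 := by
  have hwk := hw k (by omega)
  have := big_F1 hr σ hw
  omega

end bigword
section bij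

variable {r k : ℕ}

lemma window_le (hr : 2 ≤ r) {j : ℕ} (hj : j < k) : r * j + r ≤ r * k := by
  calc r * j + r = r * (j + 1) := by ring
    _ ≤ r * k := Nat.mul_le_mul_left r hj

lemma insPerm_isCluster (hr : 2 ≤ r) (h : r * k + 1 < r * (k + 1) + 1)
    (π' : Perm (Fin (r * k + 1))) (v : Fin (r * k + 1))
    (hc : IsCluster r k (ofPerm π'⁻¹)) :
    IsCluster r (k + 1) (ofPerm (insPerm h π' v)⁻¹) := by
  have e : r * (k + 1) = r * k + r := by ring
  have hv := v.isLt
  intro j hj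
  by_cases hjk : j < k
  · have hjb : r * j + r ≤ r * k := window_le hr hjk
    have hpt : ∀ p, p ≤ r * j + r →
        ofPerm (insPerm h π' v)⁻¹ p = shiftN (v : ℕ) (ofPerm π'⁻¹ p) := by
      intro p hp
      rw [ofPerm_insPerm_symm h π' v (by omega), if_pos (by omega)]
    obtain ⟨hc1, hc2, hc3⟩ := hc j hjk
    refine ⟨?_, ?_, ?_⟩
    · rw [hpt (r * j + 1) (by omega), hpt (r * j) (by omega), shiftN_lt_iff]; exact hc1
    · rw [hpt (r * j) (by omega), hpt (r * j + 2) (by omega), shiftN_lt_iff]; exact hc2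
    · intro l hl2 hlr
      rw [hpt (r * j + l) (by omega), hpt (r * j + l + 1) (by omega), shiftN_lt_iff]
      exact hc3 l hl2 hlr
  · have hjk2 : j = k := by omega
    subst hjk2
    have hw0 : ofPerm (insPerm h π' v)⁻¹ (r * j) = r * j + 1 := by
      rw [ofPerm_insPerm_symm h π' v (by omega), if_pos (by omega),
        cluster_word_top hr π' hc]
      unfold shiftN
      rw [if_neg (by omega)]
    have hw1 : ofPerm (insPerm h π' v)⁻¹ (r * j + 1) = (v : ℕ) := by
      rw [ofPerm_insPerm_symm h π' v (by omega), if_neg (by omega), if_pos rfl]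
    have hw2 : ofPerm (insPerm h π' v)⁻¹ (r * j + 2) = r * j + 2 := by
      rw [ofPerm_insPerm_symm h π' v (by omega), if_neg (by omega), if_neg (by omega)]
    refine ⟨?_, ?_, ?_⟩
    · rw [hw1, hw0]; omega
    · rw [hw0, hw2]; omega
    · intro l hl2 hlr
      rw [ofPerm_insPerm_symm h π' v (by omega), if_neg (by omega), if_neg (by omega),
        ofPerm_insPerm_symm h π' v (by omega), if_neg (by omega), if_neg (by omega)]
      omega

lemma isCluster_of_insPerm (hr : 2 ≤ r) (h : r * k + 1 < r * (k + 1) + 1)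
    (π' : Perm (Fin (r * k + 1))) (v : Fin (r * k + 1))
    (hc : IsCluster r (k + 1) (ofPerm (insPerm h π' v)⁻¹)) :
    IsCluster r k (ofPerm π'⁻¹) := by
  have e : r * (k + 1) = r * k + r := by ring
  intro j hj
  have hjb : r * j + r ≤ r * k := window_le hr hj
  have hpt : ∀ p, p ≤ r * j + r →
      ofPerm (insPerm h π' v)⁻¹ p = shiftN (v : ℕ) (ofPerm π'⁻¹ p) := by
    intro p hp
    rw [ofPerm_insPerm_symm h π' v (by omega), if_pos (by omega)]
  obtain ⟨hc1, hc2, hc3⟩ := hc j (by omega)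
  rw [hpt (r * j + 1) (by omega), hpt (r * j) (by omega), shiftN_lt_iff] at hc1
  rw [hpt (r * j) (by omega), hpt (r * j + 2) (by omega), shiftN_lt_iff] at hc2
  refine ⟨hc1, hc2, ?_⟩
  intro l hl2 hlr
  have := hc3 l hl2 hlr
  rw [hpt (r * j + l) (by omega), hpt (r * j + l + 1) (by omega), shiftN_lt_iff] at this
  exact this

lemma insPerm_surj (hr : 2 ≤ r) (h : r * k + 1 < r * (k + 1) + 1)
    (σ : Perm (Fin (r * (k + 1) + 1))) (hw : IsCluster r (k + 1) (ofPerm σ⁻¹)) :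
    ∃ (π' : Perm (Fin (r * k + 1))) (v : Fin (r * k + 1)), insPerm h π' v = σ := by
  have e : r * (k + 1) = r * k + r := by ring
  set m := r * k + 1 with hm
  have hvm : ofPerm σ⁻¹ m < m := big_F3 hr σ hw
  set vn := ofPerm σ⁻¹ m with hvn
  have hfbound : ∀ u : Fin m, ofPerm σ (shiftN vn (u : ℕ)) < m := by
    intro u
    have hu := u.isLt
    have hy : shiftN vn (u : ℕ) < r * (k + 1) + 1 := by
      have := shiftN_le (v := vn) (u := (u : ℕ)); omega
    have hq : ofPerm σ (shiftN vn (u : ℕ)) < r * (k + 1) + 1 := ofPerm_lt _ hy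
    by_contra hcon
    push_neg at hcon
    have hwq : ofPerm σ⁻¹ (ofPerm σ (shiftN vn (u : ℕ))) = shiftN vn (u : ℕ) :=
      ofPerm_inv_ofPerm σ hy
    by_cases hqm : ofPerm σ (shiftN vn (u : ℕ)) = m
    · rw [hqm] at hwq
      exact shiftN_ne hwq.symm
    · have hl : 1 ≤ ofPerm σ (shiftN vn (u : ℕ)) - m ∧
          ofPerm σ (shiftN vn (u : ℕ)) - m ≤ r - 1 := by omega
      have := big_F2 hr σ hw (ofPerm σ (shiftN vn (u : ℕ)) - m) hl.1 hl.2
      rw [show r * k + 1 + (ofPerm σ (shiftN vn (u : ℕ)) - m) = ofPerm σ (shiftN vn (u : ℕ))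
        by omega] at this
      rw [this] at hwq
      have := shiftN_le (v := vn) (u := (u : ℕ))
      omega
  set f : Fin m → Fin m := fun u => ⟨ofPerm σ (shiftN vn (u : ℕ)), hfbound u⟩ with hf
  have hinj : Function.Injective f := by
    intro u1 u2 huu
    have hval := congrArg Fin.val huu
    simp only [hf] at hval
    have h1 : shiftN vn (u1 : ℕ) < r * (k + 1) + 1 := by
      have := shiftN_le (v := vn) (u := (u1 : ℕ)); have := u1.isLt; omega
    have h2 : shiftN vn (u2 : ℕ) < r * (k + 1) + 1 := by
      have := shiftN_le (v := vn) (u := (u2 : ℕ)); have := u2.isLt; omega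
    have := ofPerm_inj σ h1 h2 hval
    apply Fin.ext
    unfold shiftN at this
    split_ifs at this <;> omega
  set π' : Perm (Fin m) := Equiv.ofBijective f (Finite.injective_iff_bijective.mp hinj) with hπ'
  have hπ'app : ∀ u, u < m → ofPerm π' u = ofPerm σ (shiftN vn u) := by
    intro u hu
    rw [ofPerm_apply _ hu, hπ']
    rfl
  refine ⟨π', ⟨vn, hvm⟩, ?_⟩
  apply perm_ext
  intro i hi
  rw [ofPerm_insPerm h π' ⟨vn, hvm⟩ hi]
  have hcv : ((⟨vn, hvm⟩ : Fin m) : ℕ) = vn := rfl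
  rw [hcv]
  split_ifs with h1 h2 h3
  · rw [hπ'app i (by omega)]
    congr 1
    unfold shiftN
    rw [if_pos h1]
  · rw [h2, hvn]
    exact (ofPerm_ofPerm_inv σ (by omega)).symm
  · rw [hπ'app (i - 1) (by omega)]
    rw [show shiftN vn (i - 1) = i by unfold shiftN; rw [if_neg (by omega)]; omega]
  · have hl : 1 ≤ i - m ∧ i - m ≤ r - 1 := by omega
    have hF2 := big_F2 hr σ hw (i - m) hl.1 hl.2
    rw [show r * k + 1 + (i - m) = i by omega] at hF2
    conv_rhs => rw [← hF2]
    exact (ofPerm_ofPerm_inv σ hi).symm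

lemma insPerm_inj {m N : ℕ} (h : m < N) {π1 π2 : Perm (Fin m)} {v1 v2 : Fin m}
    (he : insPerm h π1 v1 = insPerm h π2 v2) : π1 = π2 ∧ v1 = v2 := by
  have h1 := ofPerm_insPerm_symm h π1 v1 (show m < N from h)
  have h2 := ofPerm_insPerm_symm h π2 v2 (show m < N from h)
  rw [if_neg (lt_irrefl m), if_pos rfl] at h1 h2
  rw [he] at h1
  have hv : (v1 : ℕ) = (v2 : ℕ) := by rw [← h1, ← h2]
  have hinv : π1⁻¹ = π2⁻¹ := by
    apply perm_ext
    intro i hi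
    have g1 := ofPerm_insPerm_symm h π1 v1 (show i < N by omega)
    have g2 := ofPerm_insPerm_symm h π2 v2 (show i < N by omega)
    rw [if_pos hi] at g1 g2
    rw [he] at g1
    rw [g2] at g1
    rw [hv] at g1
    unfold shiftN at g1
    split_ifs at g1 <;> omega
  exact ⟨inv_injective hinv, Fin.ext hv⟩

end bij
section des

variable {m N : ℕ}

lemma desNum_insPerm (h : m < N) (π' : Perm (Fin m)) (v : Fin m) :
    desNum N (ofPerm (insPerm h π' v)) +
      (if 1 ≤ (v : ℕ) ∧ ofPerm π' (v : ℕ) < ofPerm π' ((v : ℕ) - 1) then 1 else 0)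
      = desNum m (ofPerm π') + 1 := by
  classical
  have hv : (v : ℕ) < m := v.isLt
  set O := ofPerm π' with hO
  set W := ofPerm (insPerm h π' v) with hW
  set g : ℕ → ℕ := fun j => if j < (v : ℕ) then j else j + 1 with hg
  set S : Finset ℕ := (Finset.range (m - 1)).filter
    (fun j => (O (j + 1) < O j) ∧ ¬(1 ≤ (v : ℕ) ∧ j = (v : ℕ) - 1)) with hS
  have hset : (Finset.range (N - 1)).filter (fun i => W (i + 1) < W i)
      = insert (v : ℕ) (S.image g) := by
    ext i
    simp only [Finset.mem_filter, Finset.mem_range, Finset.mem_insert, Finset.mem_image, hS, hg]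
    constructor
    · rintro ⟨hiN, hd⟩
      have hWi := ofPerm_insPerm h π' v (show i < N by omega)
      have hWi1 := ofPerm_insPerm h π' v (show i + 1 < N by omega)
      rw [← hW, ← hO] at hWi hWi1
      rcases Nat.lt_trichotomy i (v : ℕ) with h1 | h1 | h1
      · rw [if_pos h1] at hWi
        by_cases h2 : i + 1 < (v : ℕ)
        · rw [if_pos h2] at hWi1
          refine Or.inr ⟨i, ⟨by omega, ?_, by omega⟩, if_pos h1⟩
          rw [← hWi1, ← hWi]; exact hd
        · have h3 : i + 1 = (v : ℕ) := by omega
          rw [if_neg h2, if_pos h3] at hWi1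
          have hb := ofPerm_lt π' (show i < m by omega)
          rw [← hO] at hb
          rw [hWi, hWi1] at hd
          omega
      · exact Or.inl h1
      · rw [if_neg (by omega), if_neg (by omega)] at hWi
        by_cases h2 : i ≤ m
        · rw [if_pos h2] at hWi
          by_cases h3 : i + 1 ≤ m
          · rw [if_neg (by omega), if_neg (by omega), if_pos h3] at hWi1
            refine Or.inr ⟨i - 1, ⟨by omega, ?_, by omega⟩, by rw [if_neg (by omega)]; omega⟩
            rw [show i - 1 + 1 = i by omega]
            rw [hWi, hWi1] at hd
            rw [show i + 1 - 1 = i by omega] at hd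
            exact hd
          · rw [if_neg (by omega), if_neg (by omega), if_neg (by omega)] at hWi1
            have hb := ofPerm_lt π' (show i - 1 < m by omega)
            rw [← hO] at hb
            rw [hWi, hWi1] at hd
            omega
        · rw [if_neg h2] at hWi
          rw [if_neg (by omega), if_neg (by omega), if_neg (by omega)] at hWi1
          rw [hWi, hWi1] at hd
          omega
    · intro hi
      have hNm : m ≤ N - 1 := by omega
      rcases hi with hi | ⟨j, ⟨hjm, hdj, hcondj⟩, hgj⟩
      · subst hi
        refine ⟨by omega, ?_⟩
        have hWi := ofPerm_insPerm h π' v (show (v : ℕ) < N by omega)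
        have hWi1 := ofPerm_insPerm h π' v (show (v : ℕ) + 1 < N by omega)
        rw [← hW, ← hO] at hWi hWi1
        rw [if_neg (lt_irrefl _), if_pos rfl] at hWi
        rw [if_neg (by omega), if_neg (by omega), if_pos (by omega)] at hWi1
        rw [hWi, hWi1, show (v : ℕ) + 1 - 1 = (v : ℕ) by omega]
        have hb := ofPerm_lt π' (show (v : ℕ) < m by omega)
        rw [← hO] at hb
        exact hb
      · by_cases hjv : j < (v : ℕ)
        · rw [if_pos hjv] at hgj
          subst hgj
          refine ⟨by omega, ?_⟩
          have hWi := ofPerm_insPerm h π' v (show j < N by omega)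
          have hWi1 := ofPerm_insPerm h π' v (show j + 1 < N by omega)
          rw [← hW, ← hO] at hWi hWi1
          rw [if_pos hjv] at hWi
          by_cases h2 : j + 1 < (v : ℕ)
          · rw [if_pos h2] at hWi1
            rw [hWi, hWi1]; exact hdj
          · have h3 : j + 1 = (v : ℕ) := by omega
            exact absurd ⟨by omega, by omega⟩ hcondj
        · rw [if_neg hjv] at hgj
          subst hgj
          refine ⟨by omega, ?_⟩
          have hWi := ofPerm_insPerm h π' v (show j + 1 < N by omega)
          have hWi1 := ofPerm_insPerm h π' v (show j + 1 + 1 < N by omega)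
          rw [← hW, ← hO] at hWi hWi1
          rw [if_neg (by omega), if_neg (by omega), if_pos (by omega)] at hWi
          rw [if_neg (by omega), if_neg (by omega), if_pos (by omega)] at hWi1
          rw [hWi, hWi1, show j + 1 - 1 = j by omega, show j + 1 + 1 - 1 = j + 1 by omega]
          exact hdj
  have hnotmem : (v : ℕ) ∉ S.image g := by
    rw [Finset.mem_image]
    rintro ⟨j, hj, hgj⟩
    rw [hg] at hgj
    simp only at hgj
    split_ifs at hgj <;> omega
  have hcardins : (insert (v : ℕ) (S.image g)).card = S.card + 1 := by
    rw [Finset.card_insert_of_notMem hnotmem, Finset.card_image_of_injOn]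
    intro a _ b _ hab
    simp only [hg] at hab
    split_ifs at hab <;> omega
  have hunion : (Finset.range (m - 1)).filter (fun j => O (j + 1) < O j)
      = S ∪ ((Finset.range (m - 1)).filter
        (fun j => (O (j + 1) < O j) ∧ (1 ≤ (v : ℕ) ∧ j = (v : ℕ) - 1))) := by
    ext j
    simp only [Finset.mem_filter, Finset.mem_range, Finset.mem_union, hS]
    tauto
  have hdisj : Disjoint S ((Finset.range (m - 1)).filter
      (fun j => (O (j + 1) < O j) ∧ (1 ≤ (v : ℕ) ∧ j = (v : ℕ) - 1))) := by
    rw [Finset.disjoint_left]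
    intro a ha ha2
    simp only [Finset.mem_filter, Finset.mem_range, hS] at ha ha2
    tauto
  have hsplit : S.card +
      ((Finset.range (m - 1)).filter
        (fun j => (O (j + 1) < O j) ∧ (1 ≤ (v : ℕ) ∧ j = (v : ℕ) - 1))).card
      = desNum m O := by
    rw [desNum, hunion, Finset.card_union_of_disjoint hdisj]
  have hχ : ((Finset.range (m - 1)).filter
      (fun j => (O (j + 1) < O j) ∧ (1 ≤ (v : ℕ) ∧ j = (v : ℕ) - 1))).card
      = if 1 ≤ (v : ℕ) ∧ O (v : ℕ) < O ((v : ℕ) - 1) then 1 else 0 := by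
    split_ifs with hcond
    · rw [show ((Finset.range (m - 1)).filter
        (fun j => (O (j + 1) < O j) ∧ (1 ≤ (v : ℕ) ∧ j = (v : ℕ) - 1))) = {(v : ℕ) - 1} from ?_]
      · exact Finset.card_singleton _
      · ext j
        simp only [Finset.mem_filter, Finset.mem_range, Finset.mem_singleton]
        constructor
        · rintro ⟨_, _, _, hj⟩; exact hj
        · rintro rfl
          refine ⟨by omega, ?_, by omega, rfl⟩
          rw [show (v : ℕ) - 1 + 1 = (v : ℕ) by omega]
          exact hcond.2
    · rw [show ((Finset.range (m - 1)).filter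
        (fun j => (O (j + 1) < O j) ∧ (1 ≤ (v : ℕ) ∧ j = (v : ℕ) - 1))) = ∅ from ?_]
      · exact Finset.card_empty
      · rw [Finset.eq_empty_iff_forall_notMem]
        intro j hj
        simp only [Finset.mem_filter, Finset.mem_range] at hj
        obtain ⟨_, hdj, h1v, hj1⟩ := hj
        subst hj1
        rw [show (v : ℕ) - 1 + 1 = (v : ℕ) by omega] at hdj
        exact hcond ⟨h1v, hdj⟩
  rw [desNum, hset, hcardins]
  omega

end des
section sums

variable {r : ℕ}

lemma cluster_sum_transfer (hr : 2 ≤ r) (k : ℕ) (h : r * k + 1 < r * (k + 1) + 1)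
    (F : Perm (Fin (r * (k + 1) + 1)) → ℚ) :
    ((Finset.univ : Finset (Fin (r * k + 1))) ×ˢ (clusterSet r k)).sum
        (fun p => F (insPerm h p.2 p.1))
      = (clusterSet r (k + 1)).sum F := by
  refine Finset.sum_bij (fun p _ => insPerm h p.2 p.1) ?_ ?_ ?_ ?_
  · intro p hp
    rw [Finset.mem_product] at hp
    have hc : IsCluster r k (ofPerm p.2⁻¹) := by
      have := hp.2
      rw [clusterSet, Finset.mem_filter] at this
      exact this.2
    rw [clusterSet, Finset.mem_filter]
    exact ⟨Finset.mem_univ _, insPerm_isCluster hr h p.2 p.1 hc⟩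
  · intro p1 h1 p2 h2 he
    obtain ⟨hπ, hv⟩ := insPerm_inj h he
    exact Prod.ext hv hπ
  · intro σ hσ
    rw [clusterSet, Finset.mem_filter] at hσ
    obtain ⟨π', v, he⟩ := insPerm_surj hr h σ hσ.2
    refine ⟨(v, π'), ?_, he⟩
    rw [Finset.mem_product]
    refine ⟨Finset.mem_univ _, ?_⟩
    rw [clusterSet, Finset.mem_filter]
    refine ⟨Finset.mem_univ _, ?_⟩
    apply isCluster_of_insPerm hr h π' v
    rw [he]
    exact hσ.2
  · intro p hp
    rfl

lemma card_step (hr : 2 ≤ r) (k : ℕ) :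
    ((clusterSet r (k + 1)).card : ℚ) = ((r * k + 1 : ℕ) : ℚ) * ((clusterSet r k).card : ℚ) := by
  have h : r * k + 1 < r * (k + 1) + 1 := by
    have e : r * (k + 1) = r * k + r := by ring
    omega
  have ht := cluster_sum_transfer hr k h (fun _ => (1 : ℚ))
  rw [Finset.sum_const, Finset.sum_const, Finset.card_product, Finset.card_univ,
    Fintype.card_fin] at ht
  simp only [nsmul_eq_mul, mul_one] at ht
  rw [← ht]
  push_cast
  ring

lemma sum_step (hr : 2 ≤ r) (k : ℕ) :
    (clusterSet r (k + 1)).sum (fun π => (desNum (r * (k + 1) + 1) (ofPerm π) : ℚ))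
      = ((r * k : ℕ) : ℚ) * (clusterSet r k).sum (fun π => (desNum (r * k + 1) (ofPerm π) : ℚ))
        + ((r * k + 1 : ℕ) : ℚ) * ((clusterSet r k).card : ℚ) := by
  have h : r * k + 1 < r * (k + 1) + 1 := by
    have e : r * (k + 1) = r * k + r := by ring
    omega
  rw [← cluster_sum_transfer hr k h (fun π => (desNum (r * (k + 1) + 1) (ofPerm π) : ℚ))]
  rw [Finset.sum_product]
  rw [Finset.sum_comm]
  have inner : ∀ π' ∈ clusterSet r k,
      (∑ v : Fin (r * k + 1), (desNum (r * (k + 1) + 1) (ofPerm (insPerm h π' v)) : ℚ))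
        = ((r * k : ℕ) : ℚ) * (desNum (r * k + 1) (ofPerm π') : ℚ) + ((r * k + 1 : ℕ) : ℚ) := by
    intro π' _
    have hstep : ∀ v : Fin (r * k + 1),
        (desNum (r * (k + 1) + 1) (ofPerm (insPerm h π' v)) : ℚ)
          = (desNum (r * k + 1) (ofPerm π') : ℚ) + 1
            - (if 1 ≤ (v : ℕ) ∧ ofPerm π' (v : ℕ) < ofPerm π' ((v : ℕ) - 1) then (1 : ℚ) else 0) := by
      intro v
      have hd := desNum_insPerm h π' v
      have hd2 := congrArg (fun x : ℕ => (x : ℚ)) hd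
      push_cast at hd2
      split_ifs at hd2 ⊢ with hcond <;> linarith
    rw [Finset.sum_congr rfl (fun v _ => hstep v)]
    rw [Finset.sum_sub_distrib, Finset.sum_const, Finset.card_univ, Fintype.card_fin]
    have hite : (∑ v : Fin (r * k + 1),
        (if 1 ≤ (v : ℕ) ∧ ofPerm π' (v : ℕ) < ofPerm π' ((v : ℕ) - 1) then (1 : ℚ) else 0))
          = (desNum (r * k + 1) (ofPerm π') : ℚ) := by
      rw [Fin.sum_univ_eq_sum_range
        (fun v => if 1 ≤ v ∧ ofPerm π' v < ofPerm π' (v - 1) then (1 : ℚ) else 0) (r * k + 1)]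
      rw [Finset.sum_range_succ']
      have h0 : (if 1 ≤ 0 ∧ ofPerm π' 0 < ofPerm π' (0 - 1) then (1 : ℚ) else 0) = 0 := by
        rw [if_neg]; omega
      rw [h0, add_zero]
      have hcongr : ∀ x ∈ Finset.range (r * k),
          (if 1 ≤ x + 1 ∧ ofPerm π' (x + 1) < ofPerm π' (x + 1 - 1) then (1 : ℚ) else 0)
            = (if ofPerm π' (x + 1) < ofPerm π' x then (1 : ℚ) else 0) := by
        intro x _
        rw [show x + 1 - 1 = x by omega]
        congr 1
        simp only [eq_iff_iff]
        constructor
        · exact fun hx => hx.2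
        · exact fun hx => ⟨by omega, hx⟩
      rw [Finset.sum_congr rfl hcongr]
      rw [Finset.sum_boole]
      rw [desNum]
      norm_num
    rw [hite]
    push_cast
    ring
  rw [Finset.sum_congr rfl inner]
  rw [Finset.sum_add_distrib, ← Finset.mul_sum, Finset.sum_const, nsmul_eq_mul]
  push_cast
  ring

lemma cluster_zero : clusterSet r 0 = Finset.univ := by
  ext π
  simp [clusterSet, IsCluster]

lemma cluster_zero_card : ((clusterSet r 0).card : ℚ) = 1 := by
  rw [cluster_zero, Finset.card_univ]
  simp [Fintype.card_perm]

lemma cluster_zero_sum :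
    (clusterSet r 0).sum (fun π => (desNum (r * 0 + 1) (ofPerm π) : ℚ)) = 0 := by
  apply Finset.sum_eq_zero
  intro π _
  simp [desNum]

lemma main_id (hr : 2 ≤ r) : ∀ k, 1 ≤ k →
    ((clusterSet r k).sum (fun π => (desNum (r * k + 1) (ofPerm π) : ℚ))) * ((r : ℚ) + 1)
      = ((r * k + 1 : ℕ) : ℚ) * ((clusterSet r k).card : ℚ) := by
  intro k hk
  induction k with
  | zero => omega
  | succ k ih =>
    rw [sum_step hr k, card_step hr k]
    by_cases hk0 : k = 0
    · subst hk0
      rw [cluster_zero_sum, cluster_zero_card]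
      push_cast
      ring
    · have IH := ih (by omega)
      push_cast at IH ⊢
      linear_combination ((r : ℚ) * (k : ℚ)) * IH

lemma card_ne_zero (hr : 2 ≤ r) : ∀ k, ((clusterSet r k).card : ℚ) ≠ 0 := by
  intro k
  induction k with
  | zero => rw [cluster_zero_card]; norm_num
  | succ k ih =>
    rw [card_step hr k]
    apply mul_ne_zero _ ih
    have : (0 : ℚ) ≤ ((r * k : ℕ) : ℚ) := Nat.cast_nonneg _
    push_cast
    push_cast at this
    nlinarith

end sums


/-- the average number of descents over `π ∈ S_{rk+1}` with `π⁻¹` a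
`2134⋯(r+1)`-cluster equals `(rk+1)/(r+1)`. -/
theorem stmt16 (r k : ℕ) (hr : 2 ≤ r) (hk : 1 ≤ k) :
    ((clusterSet r k).sum (fun π => (desNum (r * k + 1) (ofPerm π) : ℚ))) /
        ((clusterSet r k).card : ℚ)
      = ((r * k + 1 : ℕ) : ℚ) / ((r + 1 : ℕ) : ℚ) := by
  have hC := card_ne_zero hr k
  have hr1 : ((r + 1 : ℕ) : ℚ) ≠ 0 := by push_cast; positivity
  rw [div_eq_div_iff hC hr1]
  have hid := main_id hr k hk
  push_cast at hid ⊢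
  linarith
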